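/- Let 𝒢 = {(A_1, a_1), …, (A_K, a_K)} be a finite set of elements of SA(2,ℤ) such that the subsemigroup ⟨A_1, …, A_K⟩ of SL(2,ℤ) is a group which is infinite cyclic and generated by an inverting scale A. Then the subsemigroup ⟨𝒢⟩ of SA(2,ℤ) is a group. -/

import Mathlib

open scoped Matrix

abbrev SL2Z := Matrix.SpecialLinearGroup (Fin 2) ℤ

/-- The special affine group `SA(2, ℤ) = ℤ² ⋊ SL(2, ℤ)`, as pairs `(A, a)`. -/
@[ext]
structure SA2 : Type where
  lin : SL2Z
  trans : Fin 2 → ℤ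

namespace SA2

instance : Mul SA2 :=
  ⟨fun p q => ⟨p.lin * q.lin, (p.lin : Matrix (Fin 2) (Fin 2) ℤ) *ᵥ q.trans + p.trans⟩⟩

instance : One SA2 := ⟨⟨1, 0⟩⟩

instance : Inv SA2 :=
  ⟨fun p => ⟨p.lin⁻¹, -(((p.lin⁻¹ : SL2Z) : Matrix (Fin 2) (Fin 2) ℤ) *ᵥ p.trans)⟩⟩

@[simp] lemma mul_lin (p q : SA2) : (p * q).lin = p.lin * q.lin := rfl
@[simp] lemma mul_trans (p q : SA2) :
    (p * q).trans = (p.lin : Matrix (Fin 2) (Fin 2) ℤ) *ᵥ q.trans + p.trans := rfl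
@[simp] lemma one_lin : (1 : SA2).lin = 1 := rfl
@[simp] lemma one_trans : (1 : SA2).trans = 0 := rfl
@[simp] lemma inv_lin (p : SA2) : (p⁻¹).lin = p.lin⁻¹ := rfl
@[simp] lemma inv_trans (p : SA2) :
    (p⁻¹).trans = -(((p.lin⁻¹ : SL2Z) : Matrix (Fin 2) (Fin 2) ℤ) *ᵥ p.trans) := rfl

instance : Group SA2 where
  mul_assoc a b c := by
    ext i
    · rw [mul_lin, mul_lin, mul_lin, mul_lin, mul_assoc]
    · simp only [mul_trans, mul_lin, Matrix.SpecialLinearGroup.coe_mul, Matrix.mulVec_add,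
        Matrix.mulVec_mulVec, add_assoc]
  one_mul a := by
    ext i
    · simp
    · simp
  mul_one a := by
    ext i
    · simp
    · simp [Matrix.mulVec_zero]
  inv_mul_cancel a := by
    ext i
    · simp
    · simp only [mul_trans, inv_trans, inv_lin, one_trans, add_neg_cancel]

end SA2

/-- A subsemigroup `S` of a group is a group if it contains the neutral element and
is closed under inverses. -/
def Subsemigroup.IsSubgroup {G : Type*} [Group G] (S : Subsemigroup G) : Prop :=
  (1 : G) ∈ S ∧ ∀ x ∈ S, x⁻¹ ∈ S

/-- An *inverting scale*: trace at most `-3` (real eigenvalue `λ < -1`). -/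
def IsInvertingScale (A : SL2Z) : Prop :=
  Matrix.trace (A : Matrix (Fin 2) (Fin 2) ℤ) ≤ -3

/-- If the subsemigroup `⟨A_1, …, A_K⟩` of `SL(2,ℤ)` is a group which
is infinite cyclic generated by an inverting scale `A`, then the subsemigroup of
`SA(2,ℤ)` generated by `𝒢 = {(A_1,a_1), …, (A_K,a_K)}` is a group. -/
theorem sa2_closure_isGroup_of_inverting_scale_generator
    (K : ℕ) (hK : 0 < K) (Afam : Fin K → SL2Z) (a : Fin K → Fin 2 → ℤ) (A : SL2Z)
    (hgrp : (Subsemigroup.closure (Set.range Afam)).IsSubgroup)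
    (hgen : (Subsemigroup.closure (Set.range Afam) : Set SL2Z)
        = (Subgroup.zpowers A : Set SL2Z))
    (hinf : Function.Injective fun n : ℤ => A ^ n)
    (hA : IsInvertingScale A) :
    (Subsemigroup.closure (Set.range fun i => SA2.mk (Afam i) (a i))).IsSubgroup := by
  set S := Subsemigroup.closure (Set.range fun i => SA2.mk (Afam i) (a i)) with hSdef
  -- every element of the closure of the Afam's is the linear part of an element of S
  have hlin : ∀ B ∈ Subsemigroup.closure (Set.range Afam), ∃ s ∈ S, s.lin = B := by
    intro B hB
    induction hB using Subsemigroup.closure_induction with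
    | mem x hx =>
      obtain ⟨i, rfl⟩ := hx
      exact ⟨SA2.mk (Afam i) (a i), Subsemigroup.subset_closure ⟨i, rfl⟩, rfl⟩
    | mul x y hx hy ihx ihy =>
      obtain ⟨s, hs, rfl⟩ := ihx
      obtain ⟨t, ht, rfl⟩ := ihy
      exact ⟨s * t, mul_mem hs ht, rfl⟩
  have hmem : ∀ B : SL2Z, B ∈ Subgroup.zpowers A → ∃ s ∈ S, s.lin = B := by
    intro B hB
    apply hlin
    have : B ∈ (Subgroup.zpowers A : Set SL2Z) := hB
    rw [← hgen] at this
    exact this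
  obtain ⟨p, hpS, hp⟩ := hmem A (Subgroup.mem_zpowers A)
  obtain ⟨q, hqS, hq⟩ := hmem A⁻¹ (inv_mem (Subgroup.mem_zpowers A))
  set t : ℤ := Matrix.trace (A : Matrix (Fin 2) (Fin 2) ℤ) with htdef
  -- Cayley-Hamilton
  have hCH : (A : Matrix (Fin 2) (Fin 2) ℤ) + ((A⁻¹ : SL2Z) : Matrix (Fin 2) (Fin 2) ℤ)
      = t • (1 : Matrix (Fin 2) (Fin 2) ℤ) := by
    rw [Matrix.SpecialLinearGroup.coe_inv, Matrix.adjugate_fin_two]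
    ext i j
    fin_cases i <;> fin_cases j <;>
      simp [htdef, Matrix.trace_fin_two, Matrix.one_apply] <;> ring
  have hCHv : ∀ v : Fin 2 → ℤ,
      (A : Matrix (Fin 2) (Fin 2) ℤ) *ᵥ v + ((A⁻¹ : SL2Z) : Matrix (Fin 2) (Fin 2) ℤ) *ᵥ v
        = t • v := by
    intro v
    rw [← Matrix.add_mulVec, hCH, Matrix.smul_mulVec, Matrix.one_mulVec]
  -- the set of translations in S
  set T : Set (Fin 2 → ℤ) := {v | SA2.mk 1 v ∈ S} with hTdef
  have Tadd : ∀ v ∈ T, ∀ w ∈ T, v + w ∈ T := by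
    intro v hv w hw
    have : SA2.mk 1 v * SA2.mk 1 w ∈ S := mul_mem hv hw
    have he : SA2.mk 1 v * SA2.mk 1 w = SA2.mk 1 (v + w) := by
      ext i <;> simp [Matrix.one_mulVec, add_comm]
    rwa [he] at this
  set c : Fin 2 → ℤ := (p * q).trans + (q * p).trans with hcdef
  have hpq : p * q = SA2.mk 1 (p * q).trans := by
    ext i
    · simp [hp, hq]
    · rfl
  have hqp : q * p = SA2.mk 1 (q * p).trans := by
    ext i
    · simp [hp, hq]
    · rfl
  have hcT : c ∈ T := by
    apply Tadd
    · show SA2.mk 1 (p * q).trans ∈ S; rw [← hpq]; exact mul_mem hpS hqS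
    · show SA2.mk 1 (q * p).trans ∈ S; rw [← hqp]; exact mul_mem hqS hpS
  have Tmap : ∀ v ∈ T, t • v + c ∈ T := by
    intro v hv
    have h1 : p * SA2.mk 1 v * q ∈ S := mul_mem (mul_mem hpS hv) hqS
    have h2 : q * SA2.mk 1 v * p ∈ S := mul_mem (mul_mem hqS hv) hpS
    have hx : p * SA2.mk 1 v * q
        = SA2.mk 1 ((A : Matrix (Fin 2) (Fin 2) ℤ) *ᵥ v + (p * q).trans) := by
      ext i
      · simp [hp, hq]
      · simp only [SA2.mul_trans, SA2.mul_lin, hp, hq, mul_one, Matrix.one_mulVec, Pi.add_apply]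
        abel
    have hy : q * SA2.mk 1 v * p
        = SA2.mk 1 (((A⁻¹ : SL2Z) : Matrix (Fin 2) (Fin 2) ℤ) *ᵥ v + (q * p).trans) := by
      ext i
      · simp [hp, hq]
      · simp only [SA2.mul_trans, SA2.mul_lin, hp, hq, mul_one, Matrix.one_mulVec, Pi.add_apply]
        abel
    have h1' : ((A : Matrix (Fin 2) (Fin 2) ℤ) *ᵥ v + (p * q).trans) ∈ T := by
      show SA2.mk 1 _ ∈ S; rw [← hx]; exact h1
    have h2' : (((A⁻¹ : SL2Z) : Matrix (Fin 2) (Fin 2) ℤ) *ᵥ v + (q * p).trans) ∈ T := by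
      show SA2.mk 1 _ ∈ S; rw [← hy]; exact h2
    have := Tadd _ h1' _ h2'
    have heq : ((A : Matrix (Fin 2) (Fin 2) ℤ) *ᵥ v + (p * q).trans)
        + (((A⁻¹ : SL2Z) : Matrix (Fin 2) (Fin 2) ℤ) *ᵥ v + (q * p).trans) = t • v + c := by
      rw [hcdef, ← hCHv v]; abel
    rwa [heq] at this
  -- adding natural multiples
  have Tnsmul : ∀ (n : ℕ) (v : Fin 2 → ℤ), v ∈ T → ∀ w ∈ T, (n : ℤ) • v + w ∈ T := by
    intro n
    induction n with
    | zero => intro v _ w hw; simpa using hw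
    | succ n ih =>
      intro v hv w hw
      have := Tadd v hv _ (ih v hv w hw)
      have heq : v + ((n : ℤ) • v + w) = ((n : ℕ) + 1 : ℤ) • v + w := by
        push_cast; rw [add_smul, one_smul]; abel
      rw [heq] at this
      simpa using this
  have ht3 : t ≤ -3 := hA
  have Tnegc : ∀ v ∈ T, -v + c ∈ T := by
    intro v hv
    have h1 := Tmap v hv
    have h2 := Tnsmul (-1 - t).toNat v hv _ h1
    have hcast : ((-1 - t).toNat : ℤ) = -1 - t := Int.toNat_of_nonneg (by omega)
    rw [hcast] at h2
    have heq : (-1 - t) • v + (t • v + c) = -v + c := by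
      rw [sub_smul, neg_smul, one_smul]; abel
    rwa [heq] at h2
  have hnegcT : -c ∈ T := by
    have := Tnegc (c + c) (Tadd c hcT c hcT)
    have heq : -(c + c) + c = -c := by abel
    rwa [heq] at this
  have Tneg : ∀ v ∈ T, -v ∈ T := by
    intro v hv
    have := Tadd _ (Tnegc v hv) _ hnegcT
    have heq : (-v + c) + -c = -v := by abel
    rwa [heq] at this
  have hzeroT : (0 : Fin 2 → ℤ) ∈ T := by
    have := Tadd c hcT _ hnegcT
    rwa [add_neg_cancel] at this
  have honeS : (1 : SA2) ∈ S := by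
    have : SA2.mk 1 0 = (1 : SA2) := by ext i <;> rfl
    rw [← this]; exact hzeroT
  refine ⟨honeS, ?_⟩
  -- inverses of generators
  have hgeninv : ∀ i : Fin K, (SA2.mk (Afam i) (a i))⁻¹ ∈ S := by
    intro i
    have hAi : Afam i ∈ Subgroup.zpowers A := by
      have : Afam i ∈ (Subsemigroup.closure (Set.range Afam) : Set SL2Z) :=
        Subsemigroup.subset_closure ⟨i, rfl⟩
      rw [hgen] at this
      exact this
    obtain ⟨qi, hqiS, hqi⟩ := hmem (Afam i)⁻¹ (inv_mem hAi)
    set g := SA2.mk (Afam i) (a i) with hgdef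
    have hgS : g ∈ S := Subsemigroup.subset_closure ⟨i, rfl⟩
    have hgq : g * qi = SA2.mk 1 (g * qi).trans := by
      ext j
      · simp [hgdef, hqi]
      · rfl
    have huT : (g * qi).trans ∈ T := by
      show SA2.mk 1 (g * qi).trans ∈ S
      rw [← hgq]; exact mul_mem hgS hqiS
    have hnuT : -(g * qi).trans ∈ T := Tneg _ huT
    have hfinal : qi * SA2.mk 1 (-(g * qi).trans) = g⁻¹ := by
      have h1 : SA2.mk 1 (-(g * qi).trans) = (g * qi)⁻¹ := by
        rw [hgq]
        ext j
        · simp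
        · simp [Matrix.one_mulVec]
      rw [h1, mul_inv_rev, ← mul_assoc, mul_inv_cancel, one_mul]
    rw [← hfinal]
    exact mul_mem hqiS hnuT
  intro x hx
  induction hx using Subsemigroup.closure_induction with
  | mem y hy => obtain ⟨i, rfl⟩ := hy; exact hgeninv i
  | mul y z hy hz ihy ihz =>
    rw [mul_inv_rev]; exact mul_mem ihz ihy
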